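/- arXiv:2410.00985 — 2 statements merged into one kernel-verified Lean document; each statement's English description precedes it below -/
import Mathlib

section
/- Let T : Ω → ℝ be integrable with mean τ = E[T], and let f : Ω → ℝ be measurable with 0 ≤ f ≤ 1. Define θ⁺(f) = E[(T − τ)·(f − E[f])], θ⁻(f) = E[(T − τ)·((1 − f) − E[1 − f])], θ⁺ = E[(T − τ)·1{T ≥ τ}] and θ⁻ = E[(T − τ)·1{T ≤ τ}]. Then |θ⁺(f) − θ⁻(f)| ≤ θ⁺ − θ⁻. -/
open MeasureTheory

theorem stmt4 {Ω : Type*} [MeasurableSpace Ω] (μ : Measure Ω) [IsProbabilityMeasure μ]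
    (T : Ω → ℝ) (hTm : Measurable T) (hT : Integrable T μ)
    (τ : ℝ) (hτ : τ = ∫ ω, T ω ∂μ)
    (f : Ω → ℝ) (hf : Measurable f) (hf01 : ∀ ω, 0 ≤ f ω ∧ f ω ≤ 1) :
    |(∫ ω, (T ω - τ) * (f ω - ∫ ω', f ω' ∂μ) ∂μ) -
        (∫ ω, (T ω - τ) * ((1 - f ω) - ∫ ω', (1 - f ω') ∂μ) ∂μ)| ≤
      (∫ ω, (T ω - τ) * (if τ ≤ T ω then (1 : ℝ) else 0) ∂μ) -
        (∫ ω, (T ω - τ) * (if T ω ≤ τ then (1 : ℝ) else 0) ∂μ) := by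
  set g : Ω → ℝ := fun ω => T ω - τ with hgdef
  have hgm : Measurable g := hTm.sub measurable_const
  have hg : Integrable g μ := hT.sub (integrable_const τ)
  have hEg : ∫ ω, g ω ∂μ = 0 := by
    rw [hgdef]
    rw [integral_sub hT (integrable_const τ)]
    simp [hτ]
  have hfi : Integrable f μ := by
    refine (integrable_const (1 : ℝ)).mono' hf.aestronglyMeasurable ?_
    exact ae_of_all _ fun ω => by
      rw [Real.norm_eq_abs, abs_le]
      exact ⟨by linarith [(hf01 ω).1], by simpa using (hf01 ω).2⟩
  -- integrability of g times bounded measurable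
  have hmul : ∀ (h : Ω → ℝ), Measurable h → (∀ ω, |h ω| ≤ 1) →
      Integrable (fun ω => g ω * h ω) μ := by
    intro h hm hb
    have := hg.bdd_mul hm.aestronglyMeasurable (c := 1) (ae_of_all _ fun ω => by
      rw [Real.norm_eq_abs]; exact hb ω)
    simpa [mul_comm] using this
  have hgf : Integrable (fun ω => g ω * f ω) μ := by
    refine hmul f hf fun ω => ?_
    rw [abs_le]; exact ⟨by linarith [(hf01 ω).1], (hf01 ω).2⟩
  set c : ℝ := ∫ ω', f ω' ∂μ with hc
  -- compute first integral
  have h1 : (∫ ω, g ω * (f ω - c) ∂μ) = ∫ ω, g ω * f ω ∂μ := by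
    have : (fun ω => g ω * (f ω - c)) = fun ω => g ω * f ω - c * g ω := by
      funext ω; ring
    rw [this, integral_sub hgf (hg.const_mul c), integral_const_mul, hEg]
    ring
  have hc2 : (∫ ω', (1 - f ω') ∂μ) = 1 - c := by
    rw [integral_sub (integrable_const 1) hfi]
    simp [hc]
  have h2 : (∫ ω, g ω * ((1 - f ω) - ∫ ω', (1 - f ω') ∂μ) ∂μ) = - ∫ ω, g ω * f ω ∂μ := by
    rw [hc2]
    have : (fun ω => g ω * ((1 - f ω) - (1 - c))) = fun ω => c * g ω - g ω * f ω := by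
      funext ω; ring
    rw [this, integral_sub (hg.const_mul c) hgf, integral_const_mul, hEg]
    ring
  -- LHS = |∫ g (2f - 1)|
  have h3 : (∫ ω, g ω * (2 * f ω - 1) ∂μ) = 2 * ∫ ω, g ω * f ω ∂μ := by
    have : (fun ω => g ω * (2 * f ω - 1)) = fun ω => 2 * (g ω * f ω) - g ω := by
      funext ω; ring
    rw [this, integral_sub (hgf.const_mul 2) hg, integral_const_mul, hEg]
    ring
  -- RHS = ∫ |g|
  have h4 : (∫ ω, g ω * (if τ ≤ T ω then (1 : ℝ) else 0) ∂μ) -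
      (∫ ω, g ω * (if T ω ≤ τ then (1 : ℝ) else 0) ∂μ) = ∫ ω, |g ω| ∂μ := by
    have hi1 : Integrable (fun ω => g ω * (if τ ≤ T ω then (1 : ℝ) else 0)) μ := by
      refine hmul _ (Measurable.ite (measurableSet_le measurable_const hTm)
        measurable_const measurable_const) fun ω => ?_
      by_cases h : τ ≤ T ω <;> simp [h]
    have hi2 : Integrable (fun ω => g ω * (if T ω ≤ τ then (1 : ℝ) else 0)) μ := by
      refine hmul _ (Measurable.ite (measurableSet_le hTm measurable_const)
        measurable_const measurable_const) fun ω => ?_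
      by_cases h : T ω ≤ τ <;> simp [h]
    rw [← integral_sub hi1 hi2]
    refine integral_congr_ae (ae_of_all _ fun ω => ?_)
    dsimp only
    rcases le_or_gt τ (T ω) with h | h
    · rcases eq_or_lt_of_le h with heq | hlt
      · simp [hgdef, ← heq]
      · rw [if_pos h, if_neg (not_le.2 hlt), abs_of_nonneg (by simp [hgdef]; linarith)]
        ring
    · rw [if_neg (not_le.2 h), if_pos h.le, abs_of_nonpos (by simp [hgdef]; linarith)]
      ring
  have hbound : |∫ ω, g ω * (2 * f ω - 1) ∂μ| ≤ ∫ ω, |g ω| ∂μ := by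
    calc |∫ ω, g ω * (2 * f ω - 1) ∂μ| ≤ ∫ ω, |g ω * (2 * f ω - 1)| ∂μ := by
          simpa only [Real.norm_eq_abs] using
            norm_integral_le_integral_norm (μ := μ) (fun ω => g ω * (2 * f ω - 1))
      _ ≤ ∫ ω, |g ω| ∂μ := by
          refine integral_mono_of_nonneg (ae_of_all _ fun ω => abs_nonneg _)
            hg.abs (ae_of_all _ fun ω => ?_)
          dsimp only
          rw [abs_mul]
          have h1 : |2 * f ω - 1| ≤ 1 := by
            rw [abs_le]; constructor <;> linarith [(hf01 ω).1, (hf01 ω).2]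
          nlinarith [abs_nonneg (g ω)]
  calc |(∫ ω, g ω * (f ω - c) ∂μ) -
        (∫ ω, g ω * ((1 - f ω) - ∫ ω', (1 - f ω') ∂μ) ∂μ)|
      = |∫ ω, g ω * (2 * f ω - 1) ∂μ| := by
        rw [h1, h2, h3, sub_neg_eq_add, two_mul]
    _ ≤ ∫ ω, |g ω| ∂μ := hbound
    _ = _ := h4.symm
end

section
/- Let T : Ω → ℝ be integrable, δ ∈ ℝ, and let F be the set of functions {1{x ≥ c} : c ∈ ℝ} ∪ {1{x ≤ c} : c ∈ ℝ} composed with a measurable X_s : Ω → ℝ. Suppose T = γ(X_s) for a monotone (nondecreasing) function γ : ℝ → ℝ. Then sup over f ∈ F of E[(T − δ)·f(X_s)] equals E[(T − δ)·1{T > δ}], provided the set {x : γ(x) > δ} is of the form {x ≥ c} or {x > c} for some c (which holds by monotonicity) and the boundary set {γ(X_s) = δ, X_s = c} has measure zero. -/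
open MeasureTheory

/-- Correct specification of the one-sided threshold class for monotone CATE:
if `T = γ ∘ Xs` with `γ` nondecreasing, the supremum of `θ⁺(f)` over the class of
one-sided threshold rules in `Xs` equals `θ⁺` evaluated at the optimal rule
`1{T > δ}`, provided `{x | γ x > δ}` is a one-sided ray with endpoint `c` and the
boundary set `{γ(Xs) = δ} ∩ {Xs = c}` has measure zero. -/
theorem stmt19 {Ω : Type*} [MeasurableSpace Ω] (μ : Measure Ω) [IsProbabilityMeasure μ]
    (Xs : Ω → ℝ) (hXs : Measurable Xs)
    (γ : ℝ → ℝ) (hγ : Monotone γ)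
    (hint : Integrable (fun ω => γ (Xs ω)) μ) (δ : ℝ)
    (F : Set (ℝ → ℝ))
    (hF : F = {f | ∃ c : ℝ, f = fun x => if c ≤ x then (1 : ℝ) else 0} ∪
              {f | ∃ c : ℝ, f = fun x => if x ≤ c then (1 : ℝ) else 0})
    (c : ℝ)
    (hray : {x : ℝ | δ < γ x} = {x : ℝ | c ≤ x} ∨ {x : ℝ | δ < γ x} = {x : ℝ | c < x})
    (hbd : μ {ω | γ (Xs ω) = δ ∧ Xs ω = c} = 0) :
    IsLUB ((fun f : ℝ → ℝ => ∫ ω, (γ (Xs ω) - δ) * f (Xs ω) ∂μ) '' F)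
      (∫ ω, (γ (Xs ω) - δ) * (if δ < γ (Xs ω) then (1 : ℝ) else 0) ∂μ) := by
  have hTδ : Integrable (fun ω => γ (Xs ω) - δ) μ := hint.sub (integrable_const δ)
  have hγm : Measurable γ := hγ.measurable
  -- integrability helper
  have hintgr : ∀ f : ℝ → ℝ, Measurable f → (∀ x, f x = 0 ∨ f x = 1) →
      Integrable (fun ω => (γ (Xs ω) - δ) * f (Xs ω)) μ := by
    intro f hfm hf01
    refine Integrable.mono' hTδ.abs ?_ ?_
    · exact (((hγm.comp hXs).sub measurable_const).mul (hfm.comp hXs)).aestronglyMeasurable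
    · refine Filter.Eventually.of_forall fun ω => ?_
      rcases hf01 (Xs ω) with h | h <;>
        simp [h, abs_mul, abs_nonneg]
  -- the optimal indicator as a function of Xs
  have hkey : ∀ ω, (if δ < γ (Xs ω) then (1:ℝ) else 0) =
      Set.indicator {x : ℝ | δ < γ x} (fun _ => (1:ℝ)) (Xs ω) := by
    intro ω; by_cases h : δ < γ (Xs ω) <;> simp [Set.indicator, h]
  have hintopt : Integrable (fun ω => (γ (Xs ω) - δ) * (if δ < γ (Xs ω) then (1:ℝ) else 0)) μ := by
    refine Integrable.mono' hTδ.abs ?_ ?_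
    · refine (((hγm.comp hXs).sub measurable_const).mul ?_).aestronglyMeasurable
      exact Measurable.ite (measurableSet_lt measurable_const (hγm.comp hXs)) measurable_const
        measurable_const
    · refine Filter.Eventually.of_forall fun ω => ?_
      by_cases h : δ < γ (Xs ω) <;> simp [h, abs_mul, abs_nonneg]
  -- upper bound: every element of the image is ≤ the optimal value
  have hub : (∫ ω, (γ (Xs ω) - δ) * (if δ < γ (Xs ω) then (1:ℝ) else 0) ∂μ) ∈
      upperBounds ((fun f : ℝ → ℝ => ∫ ω, (γ (Xs ω) - δ) * f (Xs ω) ∂μ) '' F) := by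
    rintro v ⟨f, hfF, rfl⟩
    have hf : Measurable f ∧ ∀ x, f x = 0 ∨ f x = 1 := by
      rw [hF] at hfF
      rcases hfF with ⟨c', rfl⟩ | ⟨c', rfl⟩
      · refine ⟨Measurable.ite (measurableSet_le measurable_const measurable_id)
          measurable_const measurable_const, fun x => ?_⟩
        by_cases h : c' ≤ x <;> simp [h]
      · refine ⟨Measurable.ite (measurableSet_le measurable_id measurable_const)
          measurable_const measurable_const, fun x => ?_⟩
        by_cases h : x ≤ c' <;> simp [h]
    refine integral_mono (hintgr f hf.1 hf.2) hintopt fun ω => ?_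
    rcases hf.2 (Xs ω) with h | h <;> by_cases hω : δ < γ (Xs ω) <;>
      simp [h, hω] <;> nlinarith [hf.2 (Xs ω)]
  constructor
  · exact hub
  · -- least upper bound
    intro b hb
    rcases hray with hray | hray
    · -- optimal rule is in the class
      have hiff : ∀ x, δ < γ x ↔ c ≤ x := fun x => Set.ext_iff.mp hray x
      have : ∀ ω, (if δ < γ (Xs ω) then (1:ℝ) else 0) = (if c ≤ Xs ω then (1:ℝ) else 0) := by
        intro ω
        by_cases h : δ < γ (Xs ω)
        · rw [if_pos h, if_pos ((hiff _).mp h)]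
        · rw [if_neg h, if_neg (fun hc => h ((hiff _).mpr hc))]
      have heq : (∫ ω, (γ (Xs ω) - δ) * (if δ < γ (Xs ω) then (1:ℝ) else 0) ∂μ)
          = ∫ ω, (γ (Xs ω) - δ) * (if c ≤ Xs ω then (1:ℝ) else 0) ∂μ := by
        congr 1; funext ω; rw [this ω]
      rw [heq]
      exact hb ⟨fun x => if c ≤ x then (1:ℝ) else 0, by rw [hF]; left; exact ⟨c, rfl⟩, rfl⟩
    · -- approximate from the right
      have hiff : ∀ x, δ < γ x ↔ c < x := fun x => Set.ext_iff.mp hray x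
      set g : ℕ → Ω → ℝ :=
        fun n ω => (γ (Xs ω) - δ) * (if c + ((n:ℝ)+1)⁻¹ ≤ Xs ω then (1:ℝ) else 0) with hg
      have hgint : ∀ n, Integrable (g n) μ := by
        intro n
        refine hintgr (fun x => if c + ((n:ℝ)+1)⁻¹ ≤ x then (1:ℝ) else 0) ?_ ?_
        · exact Measurable.ite (measurableSet_le measurable_const measurable_id)
            measurable_const measurable_const
        · intro x; by_cases h : c + ((n:ℝ)+1)⁻¹ ≤ x <;> simp [h]
      have hmem : ∀ n, (∫ ω, g n ω ∂μ) ∈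
          ((fun f : ℝ → ℝ => ∫ ω, (γ (Xs ω) - δ) * f (Xs ω) ∂μ) '' F) := by
        intro n
        exact ⟨fun x => if c + ((n:ℝ)+1)⁻¹ ≤ x then (1:ℝ) else 0,
          by rw [hF]; left; exact ⟨c + ((n:ℝ)+1)⁻¹, rfl⟩, rfl⟩
      have htend : Filter.Tendsto (fun n => ∫ ω, g n ω ∂μ) Filter.atTop
          (nhds (∫ ω, (γ (Xs ω) - δ) * (if δ < γ (Xs ω) then (1:ℝ) else 0) ∂μ)) := by
        refine tendsto_integral_of_dominated_convergence (fun ω => |γ (Xs ω) - δ|)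
          (fun n => (hgint n).1) hTδ.abs ?_ ?_
        · intro n
          refine Filter.Eventually.of_forall fun ω => ?_
          show ‖(γ (Xs ω) - δ) * (if c + ((n:ℝ)+1)⁻¹ ≤ Xs ω then (1:ℝ) else 0)‖ ≤ _
          by_cases h : c + ((n:ℝ)+1)⁻¹ ≤ Xs ω <;>
            simp [h, Real.norm_eq_abs, abs_nonneg]
        · refine Filter.Eventually.of_forall fun ω => ?_
          by_cases h : c < Xs ω
          · have h1 : δ < γ (Xs ω) := (hiff (Xs ω)).mpr h
            have hseq : Filter.Tendsto (fun n : ℕ => c + ((n:ℝ)+1)⁻¹) Filter.atTop (nhds c) := by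
              have h0 : Filter.Tendsto (fun n : ℕ => ((n:ℝ)+1)⁻¹) Filter.atTop (nhds 0) := by
                simpa [one_div] using tendsto_one_div_add_atTop_nhds_zero_nat (𝕜 := ℝ)
              simpa using (tendsto_const_nhds.add h0 :
                Filter.Tendsto (fun n : ℕ => c + ((n:ℝ)+1)⁻¹) Filter.atTop (nhds (c + 0)))
            have hev : ∀ᶠ n : ℕ in Filter.atTop, c + ((n:ℝ)+1)⁻¹ < Xs ω :=
              hseq.eventually_lt_const h
            refine Filter.Tendsto.congr' ?_ tendsto_const_nhds
            filter_upwards [hev] with n hn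
            show _ = g n ω
            rw [hg]
            simp only [if_pos hn.le, if_pos h1]
          · have h1 : ¬ δ < γ (Xs ω) := fun hh => h ((hiff (Xs ω)).mp hh)
            have hz : ∀ n : ℕ, g n ω = 0 := by
              intro n
              have hn : ¬ c + ((n:ℝ)+1)⁻¹ ≤ Xs ω := by
                push_neg at h ⊢
                have : (0:ℝ) < ((n:ℝ)+1)⁻¹ := by positivity
                linarith
              rw [hg]; simp only [if_neg hn, mul_zero]
            simp only [hz, if_neg h1, mul_zero]
            exact tendsto_const_nhds
      exact le_of_tendsto' htend fun n => hb (hmem n)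
end
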